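/- For vectors a, b in ℝ³ with 0 < ‖a‖ < ‖b‖, the Laplace Green's function G(a,b) = 1/(4π‖a−b‖) satisfies G(a,b) = (1/(4π)) · ∑_{n=0}^∞ (‖a‖ⁿ/‖b‖^{n+1}) · P_n(cos γ), where γ is the angle between a and b (i.e. cos γ = ⟪a,b⟫/(‖a‖‖b‖)) and P_n is the n-th Legendre polynomial. -/

import Mathlib

open scoped RealInnerProductSpace

/-- Legendre polynomial via Rodrigues' formula. -/
noncomputable def legendre (n : ℕ) : Polynomial ℝ :=
  Polynomial.C (1 / (2 ^ n * (n.factorial : ℝ))) *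
    (Polynomial.derivative)^[n] ((Polynomial.X ^ 2 - 1) ^ n)

section CbSection
open Complex Finset

noncomputable def cb (n : ℕ) : ℝ := n.centralBinom / 4 ^ n

lemma cb_zero : cb 0 = 1 := by simp [cb, Nat.centralBinom]

lemma cb_succ (n : ℕ) : cb (n + 1) = cb n * ((1/2 + n) / (n + 1)) := by
  have h := Nat.succ_mul_centralBinom_succ n
  have h4 : (4:ℝ)^(n+1) = 4^n * 4 := by ring
  have hc : ((n+1) : ℝ) * (n+1).centralBinom = 2 * (2*n+1) * n.centralBinom := by
    exact_mod_cast congrArg (Nat.cast : ℕ → ℝ) h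
  have hn1 : ((n:ℝ)+1) ≠ 0 := by positivity
  unfold cb
  field_simp [cb, h4]
  push_cast
  rw [h4]
  linear_combination (2 * (4:ℝ)^n) * hc

lemma cb_prod (n : ℕ) : (∏ j ∈ range n, ((1:ℝ)/2 + j)) / n.factorial = cb n := by
  induction n with
  | zero => simp [cb_zero]
  | succ n ih =>
    rw [prod_range_succ, Nat.factorial_succ, cb_succ, ← ih]
    have : (n.factorial : ℝ) ≠ 0 := by positivity
    push_cast
    field_simp

lemma cb_pos (n : ℕ) : 0 < cb n := by
  have h1 : (0:ℝ) < n.centralBinom := by exact_mod_cast Nat.centralBinom_pos n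
  have h2 : (0:ℝ) < 4 ^ n := by positivity
  exact div_pos h1 h2

-- iterated derivative of (1-z)^c on the unit ball
lemma iteratedDeriv_one_sub_cpow (c : ℂ) (n : ℕ) :
    ∀ z ∈ Metric.ball (0:ℂ) 1,
      iteratedDeriv n (fun w => (1 - w) ^ c) z
        = (∏ j ∈ range n, (c - j)) * (-1)^n * (1 - z) ^ (c - n) := by
  induction n with
  | zero => intro z hz; simp
  | succ n ih =>
    intro z hz
    rw [iteratedDeriv_succ]
    have hev : (fun w => iteratedDeriv n (fun w => (1 - w) ^ c) w)
        =ᶠ[nhds z] (fun w => (∏ j ∈ range n, (c - j)) * (-1)^n * (1 - w) ^ (c - n)) := by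
      filter_upwards [Metric.isOpen_ball.mem_nhds hz] with w hw using ih w hw
    rw [hev.deriv_eq]
    have hre : 0 < (1 - z).re := by
      have hlt : z.re < 1 := by
        calc z.re ≤ ‖z‖ := Complex.re_le_norm z
          _ < 1 := by simpa [dist_zero_right] using Metric.mem_ball.mp hz
      simp [Complex.sub_re]; linarith
    have hd : HasDerivAt (fun w : ℂ => (1 - w) ^ (c - n))
        ((c - n) * (1 - z) ^ (c - n - 1) * (-1)) z := by
      have h1 : HasDerivAt (fun w : ℂ => 1 - w) (-1) z := by
        simpa using (hasDerivAt_id z).const_sub 1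
      exact h1.cpow_const (Or.inl hre)
    rw [deriv_const_mul _ hd.differentiableAt]
    rw [hd.deriv]
    rw [prod_range_succ]
    push_cast
    ring_nf


lemma re_pos_of_mem_ball {z : ℂ} (hz : z ∈ Metric.ball (0:ℂ) 1) : 0 < (1 - z).re := by
  have hlt : z.re < 1 :=
    lt_of_le_of_lt (Complex.re_le_norm z) (by simpa [dist_zero_right] using Metric.mem_ball.mp hz)
  simp [Complex.sub_re]; linarith

lemma hasSum_cb_cpow {z : ℂ} (hz : ‖z‖ < 1) :
    HasSum (fun n => (cb n : ℂ) * z ^ n) ((1 - z) ^ (-(1/2) : ℂ)) := by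
  have hf : DifferentiableOn ℂ (fun w : ℂ => (1 - w) ^ (-(1/2) : ℂ)) (Metric.ball 0 1) := by
    intro w hw
    have h1 : HasDerivAt (fun w : ℂ => 1 - w) (-1) w := by
      simpa using (hasDerivAt_id w).const_sub 1
    exact (h1.cpow_const (Or.inl (re_pos_of_mem_ball hw))).differentiableAt.differentiableWithinAt
  have hzb : z ∈ Metric.ball (0:ℂ) 1 := by simpa [dist_zero_right] using hz
  have H := Complex.hasSum_taylorSeries_on_ball hf hzb
  simp only [sub_zero] at H
  rw [show (fun n : ℕ => (cb n : ℂ) * z ^ n) = fun n : ℕ => ((n.factorial : ℂ))⁻¹ • z ^ n •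
      iteratedDeriv n (fun w : ℂ => (1 - w) ^ (-(1/2) : ℂ)) 0 from ?_]
  · exact H
  funext n
  rw [iteratedDeriv_one_sub_cpow _ n 0 (by simp)]
  have hcb : (cb n : ℂ) = (n.factorial : ℂ)⁻¹ * ((∏ j ∈ range n, (-(1/2:ℂ) - j)) * (-1)^n) := by
    have h1 : (∏ j ∈ range n, (-(1/2:ℂ) - j)) * (-1)^n = ∏ j ∈ range n, ((1:ℂ)/2 + j) := by
      rw [show ((-1:ℂ))^n = ∏ _j ∈ range n, (-1:ℂ) by simp, ← Finset.prod_mul_distrib]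
      exact Finset.prod_congr rfl fun j _ => by ring
    rw [h1, ← cb_prod n]
    push_cast
    ring
  rw [hcb]
  simp only [smul_eq_mul, sub_zero, one_cpow]
  ring


noncomputable def qc (γ : ℝ) (n : ℕ) : ℝ :=
  ∑ p ∈ antidiagonal n, cb p.1 * cb p.2 * Real.cos (((p.1 : ℝ) - p.2) * γ)

lemma cpow_conj_prod (γ t : ℝ) (ht : |t| < 1) :
    (1 - t * exp (γ * I)) ^ (-(1/2) : ℂ) * (1 - t * exp (-γ * I)) ^ (-(1/2) : ℂ)
      = ((Real.sqrt (1 - 2 * Real.cos γ * t + t ^ 2))⁻¹ : ℝ) := by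
  set z : ℂ := 1 - t * exp (γ * I) with hzdef
  have hre : 0 < z.re := by
    have h1 : z.re = 1 - t * Real.cos γ := by
      simp [hzdef, Complex.sub_re, Complex.mul_re, Complex.exp_ofReal_mul_I_re]
    rw [h1]
    have h2 : t * Real.cos γ < 1 := by
      calc t * Real.cos γ ≤ |t * Real.cos γ| := le_abs_self _
        _ = |t| * |Real.cos γ| := abs_mul _ _
        _ ≤ |t| * 1 := by
            exact mul_le_mul_of_nonneg_left (Real.abs_cos_le_one γ) (abs_nonneg t)
        _ < 1 := by simpa using ht
    linarith
  have hconj : (starRingEnd ℂ) z = 1 - t * exp (-γ * I) := by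
    simp [hzdef, ← Complex.exp_conj, map_mul]
  have harg : z.arg ≠ Real.pi := by
    intro h
    have := Complex.arg_eq_pi_iff.mp h
    linarith [this.1]
  have hz0 : z ≠ 0 := by
    intro h; rw [h] at hre; simp at hre
  have hD : z.re ^ 2 + z.im ^ 2 = 1 - 2 * Real.cos γ * t + t ^ 2 := by
    have h1 : z.re = 1 - t * Real.cos γ := by
      simp [hzdef, Complex.sub_re, Complex.mul_re, Complex.exp_ofReal_mul_I_re]
    have h2 : z.im = -(t * Real.sin γ) := by
      simp [hzdef, Complex.sub_im, Complex.mul_im, Complex.exp_ofReal_mul_I_im]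
    rw [h1, h2]
    nlinarith [Real.sin_sq_add_cos_sq γ]
  rw [← hconj, Complex.conj_cpow _ _ harg]
  rw [show (starRingEnd ℂ) (-(1/2):ℂ) = (-(1/2):ℂ) by simp [Complex.conj_eq_iff_im]]
  rw [Complex.mul_conj]
  have habs : ‖z ^ (-(1/2):ℂ)‖ = ‖z‖ ^ ((-(1/2):ℝ)) := by
    rw [Complex.norm_cpow_of_ne_zero hz0]
    simp
  rw [Complex.normSq_eq_norm_sq, habs]
  rw [← Real.rpow_natCast _ 2, ← Real.rpow_mul (norm_nonneg z)]
  norm_num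
  rw [Real.rpow_neg_one]
  congr 1
  rw [Complex.norm_def, Complex.normSq_apply]
  rw [← hD]
  push_cast
  ring_nf

lemma norm_cb_term (t γ : ℝ) (n : ℕ) : ‖(cb n : ℂ) * (↑t * exp (↑γ * I)) ^ n‖ = cb n * |t| ^ n := by
  rw [norm_mul, norm_pow, norm_mul]
  simp [Complex.norm_exp_ofReal_mul_I, abs_of_pos (cb_pos n)]

lemma summable_cb_abs {t : ℝ} (ht : |t| < 1) : Summable (fun n => cb n * |t| ^ n) := by
  have h := (hasSum_cb_cpow (z := ((|t| : ℝ) : ℂ)) (by simpa using ht)).summable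
  have := h.map Complex.reCLM Complex.continuous_re
  refine this.congr fun n => ?_
  simp [Function.comp, ← Complex.ofReal_pow, ← Complex.ofReal_mul]

lemma hasSum_qc (γ t : ℝ) (ht : |t| < 1) :
    HasSum (fun n => qc γ n * t ^ n)
      ((Real.sqrt (1 - 2 * Real.cos γ * t + t ^ 2))⁻¹) := by
  set f : ℕ → ℂ := fun n => (cb n : ℂ) * (↑t * exp (↑γ * I)) ^ n with hfdef
  set g : ℕ → ℂ := fun n => (cb n : ℂ) * (↑t * exp (↑(-γ) * I)) ^ n with hgdef
  have hnf : ∀ n, ‖f n‖ = cb n * |t| ^ n := fun n => norm_cb_term t γ n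
  have hng : ∀ n, ‖g n‖ = cb n * |t| ^ n := fun n => norm_cb_term t (-γ) n
  have hfs : Summable fun n => ‖f n‖ := by
    rw [show (fun n => ‖f n‖) = fun n => cb n * |t| ^ n from funext hnf]
    exact summable_cb_abs ht
  have hgs : Summable fun n => ‖g n‖ := by
    rw [show (fun n => ‖g n‖) = fun n => cb n * |t| ^ n from funext hng]
    exact summable_cb_abs ht
  have hzf : ‖(↑t * exp (↑γ * I) : ℂ)‖ < 1 := by
    rw [norm_mul, show ‖exp (↑γ * I)‖ = 1 from by
      rw [Complex.norm_exp_ofReal_mul_I]]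
    simpa using ht
  have hzg : ‖(↑t * exp (↑(-γ) * I) : ℂ)‖ < 1 := by
    rw [norm_mul, show ‖exp (↑(-γ) * I)‖ = 1 from by
      rw [Complex.norm_exp_ofReal_mul_I]]
    simpa using ht
  have hf : HasSum f ((1 - ↑t * exp (↑γ * I)) ^ (-(1/2) : ℂ)) := hasSum_cb_cpow hzf
  have hg : HasSum g ((1 - ↑t * exp (↑(-γ) * I)) ^ (-(1/2) : ℂ)) := hasSum_cb_cpow hzg
  have hprod : (1 - ↑t * exp (↑γ * I)) ^ (-(1/2) : ℂ) * (1 - ↑t * exp (↑(-γ) * I)) ^ (-(1/2) : ℂ)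
      = ((Real.sqrt (1 - 2 * Real.cos γ * t + t ^ 2))⁻¹ : ℝ) := by
    have := cpow_conj_prod γ t ht
    rw [← this]
    norm_num
  have hsum : Summable fun n => ∑ kl ∈ antidiagonal n, f kl.1 * g kl.2 :=
    (summable_norm_sum_mul_antidiagonal_of_summable_norm hfs hgs).of_norm
  have htsum : ∑' n, ∑ kl ∈ antidiagonal n, f kl.1 * g kl.2
      = ((Real.sqrt (1 - 2 * Real.cos γ * t + t ^ 2))⁻¹ : ℝ) := by
    rw [← tsum_mul_tsum_eq_tsum_sum_antidiagonal_of_summable_norm hfs hgs,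
      hf.tsum_eq, hg.tsum_eq, hprod]
  have hC : HasSum (fun n => ∑ kl ∈ antidiagonal n, f kl.1 * g kl.2)
      (((Real.sqrt (1 - 2 * Real.cos γ * t + t ^ 2))⁻¹ : ℝ) : ℂ) := htsum ▸ hsum.hasSum
  have hre := Complex.hasSum_re hC
  simp only [Complex.ofReal_re] at hre
  have hterm : ∀ n, (∑ kl ∈ antidiagonal n, f kl.1 * g kl.2).re = qc γ n * t ^ n := by
    intro n
    rw [Complex.re_sum, qc, Finset.sum_mul]
    refine Finset.sum_congr rfl fun kl hkl => ?_
    obtain ⟨j, k⟩ := kl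
    have hjk : j + k = n := Finset.HasAntidiagonal.mem_antidiagonal.mp hkl
    subst hjk
    have e1 : exp (↑γ * I) ^ j * exp (↑(-γ) * I) ^ k = exp (↑(((j : ℝ) - k) * γ) * I) := by
      rw [← Complex.exp_nat_mul, ← Complex.exp_nat_mul, ← Complex.exp_add]
      congr 1
      push_cast
      ring
    have hfg : f j * g k = ((cb j * cb k * t ^ (j + k) : ℝ) : ℂ)
        * exp (↑(((j : ℝ) - k) * γ) * I) := by
      simp only [hfdef, hgdef, mul_pow]
      rw [← e1]
      push_cast
      ring
    rw [hfg, Complex.re_ofReal_mul, Complex.exp_ofReal_mul_I_re]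
    ring
  simp only [hterm] at hre
  exact hre


end CbSection

section LegEval
open Finset Polynomial

lemma legendre_eval (m : ℕ) (x : ℝ) :
    (legendre m).eval x = ∑ k ∈ range (m + 1),
      ((-1 : ℝ) ^ k * (m.choose k) * ((2 * (m - k)).descFactorial m))
        / (2 ^ m * m.factorial) * x ^ (m - 2 * k) := by
  have h1 : ((X : Polynomial ℝ) ^ 2 - 1) ^ m
      = ∑ j ∈ range (m + 1), Polynomial.C ((-1 : ℝ) ^ (j + m) * (m.choose j)) * X ^ (2 * j) := by
    have h := sub_pow ((X : Polynomial ℝ) ^ 2) 1 m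
    rw [h]
    refine Finset.sum_congr rfl fun j hj => ?_
    rw [← pow_mul]
    simp only [map_mul, map_pow, map_neg, map_one, Polynomial.C_eq_natCast]
    ring
  have h2 : ∀ j, (Polynomial.derivative)^[m]
        (Polynomial.C ((-1 : ℝ) ^ (j + m) * (m.choose j)) * X ^ (2 * j))
      = Polynomial.C ((-1 : ℝ) ^ (j + m) * (m.choose j) * ((2 * j).descFactorial m))
          * X ^ (2 * j - m) := by
    intro j
    rw [Polynomial.iterate_derivative_C_mul, Polynomial.iterate_derivative_X_pow_eq_smul,
      smul_eq_C_mul, ← mul_assoc, ← map_mul]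
  rw [legendre, h1, Polynomial.iterate_derivative_sum]
  simp only [h2]
  rw [Finset.mul_sum, Polynomial.eval_finset_sum]
  rw [← Finset.sum_range_reflect]
  refine Finset.sum_congr rfl fun k hk => ?_
  have hk' : k ≤ m := by simpa [Nat.lt_succ_iff] using hk
  simp only [Polynomial.eval_mul, Polynomial.eval_C, Polynomial.eval_pow, Polynomial.eval_X]
  rw [show m + 1 - 1 - k = m - k from by omega]
  rw [show (-1 : ℝ) ^ ((m - k) + m) = (-1) ^ k from by
    rw [show (m - k) + m = k + 2 * (m - k) from by omega, pow_add, pow_mul]; norm_num]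
  rw [Nat.choose_symm hk']
  rw [show 2 * (m - k) - m = m - 2 * k from by omega]
  ring


end LegEval

section Rearrange
open Finset

lemma hasSum_cb_real {u : ℝ} (hu : |u| < 1) :
    HasSum (fun n => cb n * u ^ n) ((Real.sqrt (1 - u))⁻¹) := by
  have h := hasSum_cb_cpow (z := (u : ℂ)) (by simpa using hu)
  have h1u : (0:ℝ) < 1 - u := by cases abs_lt.mp hu; linarith
  have hval : ((1 : ℂ) - u) ^ (-(1/2) : ℂ) = (((Real.sqrt (1 - u))⁻¹ : ℝ) : ℂ) := by
    rw [show ((1:ℂ) - u) = (((1 - u : ℝ)) : ℂ) from by push_cast; ring]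
    rw [show (-(1/2) : ℂ) = ((-(1/2) : ℝ) : ℂ) from by push_cast; ring]
    rw [← Complex.ofReal_cpow h1u.le]
    rw [Real.rpow_neg h1u.le, Real.sqrt_eq_rpow]
  rw [hval] at h
  have := Complex.hasSum_re h
  simp only [Complex.ofReal_re] at this
  refine this.congr fun n => ?_
  simp [← Complex.ofReal_pow, ← Complex.ofReal_mul]

lemma key_coeff (k s : ℕ) :
    cb (k + s) * (((k + s).choose k : ℝ)) * 2 ^ s
      = ((2 * k + s).choose k : ℝ) * ((2 * (k + s)).descFactorial (2 * k + s))
          / (2 ^ (2 * k + s) * (2 * k + s).factorial) := by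
  have e1 : (Nat.centralBinom (k + s) : ℝ)
      = (2 * (k + s)).factorial / ((k + s).factorial * (k + s).factorial) := by
    rw [Nat.centralBinom, Nat.cast_choose ℝ (by omega),
      show 2 * (k + s) - (k + s) = k + s from by omega]
  have e2 : (((k + s).choose k : ℝ)) = (k + s).factorial / (k.factorial * s.factorial) := by
    rw [Nat.cast_choose ℝ (by omega), show k + s - k = s from by omega]
  have e3 : (((2 * k + s).choose k : ℝ)) = (2 * k + s).factorial / (k.factorial * (k + s).factorial) := by
    rw [Nat.cast_choose ℝ (by omega), show 2 * k + s - k = k + s from by omega]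
  have e4 : (((2 * (k + s)).descFactorial (2 * k + s) : ℝ))
      = (2 * k + s).factorial * ((2 * (k + s)).factorial / ((2 * k + s).factorial * s.factorial)) := by
    rw [Nat.descFactorial_eq_factorial_mul_choose]
    push_cast
    rw [Nat.cast_choose ℝ (by omega), show 2 * (k + s) - (2 * k + s) = s from by omega]
  have h4 : (4 : ℝ) ^ (k + s) = 2 ^ (2 * (k + s)) := by
    rw [show (4:ℝ) = 2 ^ 2 from by norm_num, ← pow_mul]
  rw [cb, e1, e2, e3, e4, h4]
  have n1 : ((k + s).factorial : ℝ) ≠ 0 := Nat.cast_ne_zero.mpr (Nat.factorial_ne_zero _)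
  have n2 : (k.factorial : ℝ) ≠ 0 := Nat.cast_ne_zero.mpr (Nat.factorial_ne_zero _)
  have n3 : (s.factorial : ℝ) ≠ 0 := Nat.cast_ne_zero.mpr (Nat.factorial_ne_zero _)
  have n4 : ((2 * k + s).factorial : ℝ) ≠ 0 := Nat.cast_ne_zero.mpr (Nat.factorial_ne_zero _)
  have n5 : ((2 * (k + s)).factorial : ℝ) ≠ 0 := Nat.cast_ne_zero.mpr (Nat.factorial_ne_zero _)
  have n6 : (2 : ℝ) ^ (2 * (k + s)) ≠ 0 := by positivity
  have n7 : (2 : ℝ) ^ (2 * k + s) ≠ 0 := by positivity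
  field_simp
  ring_nf

lemma hasSum_legendre_small {x t : ℝ} (hx : 2 * |x| * |t| + t ^ 2 < 1) :
    HasSum (fun m => (legendre m).eval x * t ^ m)
      ((Real.sqrt (1 - 2 * x * t + t ^ 2))⁻¹) := by
  have ht2 : (0:ℝ) ≤ 2 * |x| * |t| := by positivity
  have hr : |2 * |x| * |t| + t ^ 2| < 1 := by
    rw [abs_of_nonneg (by positivity)]; exact hx
  have hu : |2 * x * t - t ^ 2| < 1 := by
    calc |2 * x * t - t ^ 2| ≤ |2 * x * t| + |t ^ 2| := abs_sub _ _
      _ = 2 * |x| * |t| + t ^ 2 := by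
          rw [abs_mul, abs_mul, abs_of_nonneg (show (0:ℝ) ≤ 2 by norm_num), abs_pow, sq_abs]
      _ < 1 := hx
  set u : ℝ := 2 * x * t - t ^ 2 with hudef
  have hb := hasSum_cb_real hu
  -- the doubly-indexed series
  set g : ℕ × ℕ → ℝ := fun p =>
    if p.2 ≤ p.1 then cb p.1 * (p.1.choose p.2) * (2*x)^(p.1-p.2) * (-1)^p.2 * t^(p.1+p.2) else 0
    with hgdef
  have habs_row : ∀ n k, |g (n, k)|
      = if k ≤ n then cb n * (n.choose k) * (2*|x|)^(n-k) * |t|^(n+k) else 0 := by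
    intro n k
    by_cases h : k ≤ n
    · simp only [hgdef, if_pos h]
      rw [abs_mul, abs_mul, abs_mul, abs_mul, abs_pow, abs_pow, abs_pow]
      rw [abs_of_pos (cb_pos n), abs_mul, Nat.abs_cast]
      simp [abs_of_nonneg]
    · simp [hgdef, if_neg h]
  have hrow_sum : ∀ n, ∑' k, |g (n, k)| = cb n * (t^2 + 2 * |x| * |t|) ^ n := by
    intro n
    rw [tsum_eq_sum (s := range (n+1)) (f := fun k => |g (n, k)|) (fun k hk => by
      show |g (n, k)| = 0
      rw [habs_row n k, if_neg (fun h => hk (Finset.mem_range.mpr (by omega)))])]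
    rw [add_pow, Finset.mul_sum]
    refine Finset.sum_congr rfl fun k hk => ?_
    have hk' : k ≤ n := by simpa [Nat.lt_succ_iff] using hk
    rw [habs_row n k, if_pos hk']
    rw [show |t| ^ (n + k) = |t|^(n-k) * |t|^(2*k) from by
      rw [← pow_add]; congr 1; omega]
    rw [show (t^2)^k = (|t|^(2*k)) from by rw [← sq_abs, ← pow_mul]]
    ring
  have habs : Summable fun p : ℕ × ℕ => |g p| := by
    rw [summable_prod_of_nonneg (fun p => abs_nonneg _)]
    constructor
    · intro n
      apply summable_of_ne_finset_zero (s := range (n+1))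
      intro k hk
      rw [habs_row n k, if_neg (fun h => hk (Finset.mem_range.mpr (by omega)))]
    · apply Summable.congr _ (fun n => (hrow_sum n).symm)
      have := summable_cb_abs (t := t^2 + 2 * |x| * |t|) (by rw [abs_of_nonneg (by positivity)]; linarith)
      refine this.congr fun n => ?_
      rw [show abs (t^2 + 2 * |x| * |t|) = t^2 + 2 * |x| * |t| from abs_of_nonneg (by positivity)]
  have hg : Summable g := by
    apply Summable.of_norm
    simpa [Real.norm_eq_abs] using habs
  have hrows : ∀ n, HasSum (fun k => g (n, k)) (cb n * u ^ n) := by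
    intro n
    have h0 : ∀ k ∉ range (n+1), g (n, k) = 0 := fun k hk => by
      simp only [hgdef]; rw [if_neg (fun h => hk (Finset.mem_range.mpr (by omega)))]
    have hfin := hasSum_sum_of_ne_finset_zero (L := SummationFilter.unconditional ℕ) h0
    have heq : ∑ k ∈ range (n+1), g (n, k) = cb n * u ^ n := by
      rw [hudef, show 2*x*t - t^2 = -t^2 + 2*x*t from by ring, add_pow, Finset.mul_sum]
      refine Finset.sum_congr rfl fun k hk => ?_
      have hk' : k ≤ n := by simpa [Nat.lt_succ_iff] using hk
      simp only [hgdef, if_pos hk']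
      rw [show t ^ (n + k) = t^(n-k) * t^(2*k) from by rw [← pow_add]; congr 1; omega]
      ring
    rw [← heq]
    exact hfin
  have hG : HasSum g ((Real.sqrt (1 - u))⁻¹) := by
    have htsum : ∑' p, g p = (Real.sqrt (1 - u))⁻¹ := by
      rw [Summable.tsum_prod' hg (fun n => (hrows n).summable)]
      rw [tsum_congr (fun n => (hrows n).tsum_eq)]
      exact hb.tsum_eq
    exact htsum ▸ hg.hasSum
  -- regroup by total degree
  set F : ℕ × ℕ → ℝ := fun p =>
    if 2 * p.2 ≤ p.1 then
      cb (p.1 - p.2) * ((p.1 - p.2).choose p.2) * (2*x)^(p.1 - 2*p.2) * (-1)^p.2 * t^p.1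
    else 0 with hFdef
  set i : ℕ × ℕ → ℕ × ℕ := fun p => (p.1 + p.2, p.2) with hidef
  have hinj : Function.Injective i := by
    intro p q h
    simp only [hidef, Prod.mk.injEq] at h
    exact Prod.ext (by omega) h.2
  have hcomp : F ∘ i = g := by
    funext p
    obtain ⟨n, k⟩ := p
    simp only [hgdef, hFdef, hidef, Function.comp_apply]
    by_cases h : k ≤ n
    · rw [if_pos (by omega : 2 * k ≤ n + k), if_pos h,
        show n + k - k = n from by omega, show n + k - 2 * k = n - k from by omega]
    · rw [if_neg (by omega : ¬ 2 * k ≤ n + k), if_neg h]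
  have hvanish : ∀ p ∉ Set.range i, F p = 0 := by
    intro p hp
    obtain ⟨m, k⟩ := p
    have : ¬ (k ≤ m) := by
      intro h
      exact hp ⟨(m - k, k), by simp only [hidef]; exact Prod.ext (by simp; omega) rfl⟩
    simp only [hFdef]
    rw [if_neg (by omega)]
  have hF : HasSum F ((Real.sqrt (1 - u))⁻¹) := by
    rw [← hinj.hasSum_iff hvanish]
    rw [hcomp]
    exact hG
  have hfib : ∀ m, HasSum (fun k => F (m, k)) ((legendre m).eval x * t ^ m) := by
    intro m
    have h0 : ∀ k ∉ range (m+1), F (m, k) = 0 := fun k hk => by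
      simp only [hFdef]; rw [if_neg (by
        intro h; exact hk (Finset.mem_range.mpr (by omega)))]
    have hfin := hasSum_sum_of_ne_finset_zero (L := SummationFilter.unconditional ℕ) h0
    have heq : ∑ k ∈ range (m+1), F (m, k) = (legendre m).eval x * t ^ m := by
      rw [legendre_eval, Finset.sum_mul]
      refine Finset.sum_congr rfl fun k hk => ?_
      have hk' : k ≤ m := by simpa [Nat.lt_succ_iff] using hk
      by_cases h2k : 2 * k ≤ m
      · obtain ⟨s, rfl⟩ : ∃ s, m = 2 * k + s := ⟨m - 2 * k, by omega⟩
        simp only [hFdef]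
        rw [if_pos h2k]
        rw [show 2 * k + s - k = k + s from by omega, show 2 * k + s - 2 * k = s from by omega]
        have hkc := key_coeff k s
        linear_combination (x ^ s * (-1) ^ k * t ^ (2 * k + s)) * hkc
      · simp only [hFdef]
        rw [if_neg h2k]
        rw [show ((2 * (m - k)).descFactorial m : ℝ) = 0 from by
          rw [Nat.descFactorial_eq_zero_iff_lt.mpr (by omega)]; simp]
        ring
    rw [← heq]
    exact hfin
  have := hF.prod_fiberwise hfib
  rw [show 1 - 2 * x * t + t ^ 2 = 1 - u from by rw [hudef]; ring]
  exact this


end Rearrange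

section Unique
open FormalMultilinearSeries

lemma hasFPowerSeriesAt_of_hasSum {a : ℕ → ℝ} {f : ℝ → ℝ} {r : ℝ} (hr : 0 < r)
    (ha : ∀ t : ℝ, |t| < r → HasSum (fun n => a n * t ^ n) (f t)) :
    HasFPowerSeriesAt f (ofScalars ℝ a) 0 := by
  set s : NNReal := (r / 2).toNNReal with hs
  have hs0 : (0:ℝ) < r / 2 := by linarith
  have hsc : ((s : ℝ)) = r / 2 := Real.coe_toNNReal _ hs0.le
  have hspos : (0 : ENNReal) < (s : ENNReal) := by
    simp only [ENNReal.coe_pos]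
    exact Real.toNNReal_pos.mpr hs0
  have hrad : (s : ENNReal) ≤ (ofScalars ℝ a).radius := by
    apply le_radius_of_isBigO
    have hsum := (ha (r / 2) (by rw [abs_of_pos hs0]; linarith)).summable
    have htend := hsum.tendsto_atTop_zero
    have hO := htend.isBigO_one ℝ
    refine Asymptotics.IsBigO.trans ?_ hO
    apply Asymptotics.isBigO_of_le
    intro n
    rw [ofScalars_norm, hsc]
    simp only [Real.norm_eq_abs, abs_mul, abs_abs, abs_pow]
    exact le_refl _
  refine ⟨(s : ENNReal), hrad, hspos, ?_⟩
  intro y hy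
  have hy' : |y| < r / 2 := by
    have h1 : (‖y‖₊ : ENNReal) < (s : ENNReal) := by
      rw [← enorm_eq_nnnorm]; exact mem_emetric_ball_zero_iff.mp hy
    have h2 : ‖y‖₊ < s := by exact_mod_cast h1
    have h3 : ‖y‖ < (s : ℝ) := h2
    rwa [Real.norm_eq_abs, hsc] at h3
  have hsum := ha y (by linarith)
  simp only [zero_add, ofScalars_apply_eq, smul_eq_mul]
  exact hsum

lemma coeff_unique {a b : ℕ → ℝ} {f : ℝ → ℝ} {r : ℝ} (hr : 0 < r)
    (ha : ∀ t : ℝ, |t| < r → HasSum (fun n => a n * t ^ n) (f t))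
    (hb : ∀ t : ℝ, |t| < r → HasSum (fun n => b n * t ^ n) (f t)) : a = b := by
  have hpa := hasFPowerSeriesAt_of_hasSum hr ha
  have hpb := hasFPowerSeriesAt_of_hasSum hr hb
  have := hpa.eq_formalMultilinearSeries hpb
  exact ofScalars_series_injective ℝ ℝ this


end Unique

theorem laplace_multipole_expansion
    (a b : EuclideanSpace ℝ (Fin 3)) (ha : 0 < ‖a‖) (hab : ‖a‖ < ‖b‖) :
    HasSum
      (fun n : ℕ =>
        (1 / (4 * Real.pi)) * (‖a‖ ^ n / ‖b‖ ^ (n + 1)) *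
          (legendre n).eval (⟪a, b⟫ / (‖a‖ * ‖b‖)))
      (1 / (4 * Real.pi * ‖a - b‖)) := by
  have hb0 : (0:ℝ) < ‖b‖ := lt_trans ha hab
  set x : ℝ := ⟪a, b⟫ / (‖a‖ * ‖b‖) with hxdef
  set t : ℝ := ‖a‖ / ‖b‖ with htdef
  have hx1 : |x| ≤ 1 := by
    rw [hxdef, abs_div, abs_of_pos (by positivity : (0:ℝ) < ‖a‖ * ‖b‖)]
    exact div_le_one_of_le₀ (abs_real_inner_le_norm a b) (by positivity)
  have hxl := abs_le.mp hx1
  have ht0 : 0 < t := div_pos ha hb0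
  have ht1 : t < 1 := (div_lt_one hb0).mpr hab
  set γ : ℝ := Real.arccos x with hγdef
  have hcos : Real.cos γ = x := Real.cos_arccos hxl.1 hxl.2
  have hcoeff : (fun n => (legendre n).eval x) = qc γ := by
    apply coeff_unique (r := 1/4)
      (f := fun τ => (Real.sqrt (1 - 2 * x * τ + τ ^ 2))⁻¹) (by norm_num)
    · intro τ hτ
      apply hasSum_legendre_small
      have h1 : 2 * |x| * |τ| ≤ 2 * |τ| := by nlinarith [abs_nonneg τ, abs_nonneg x]
      have h2 : τ^2 < 1/16 := by nlinarith [abs_nonneg τ, sq_abs τ, abs_lt.mp hτ]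
      nlinarith [abs_nonneg τ, abs_lt.mp hτ]
    · intro τ hτ
      have hτ1 : |τ| < 1 := by linarith
      have := hasSum_qc γ τ hτ1
      rwa [hcos] at this
  have hmain := hasSum_qc γ t (by rw [abs_of_pos ht0]; exact ht1)
  rw [hcos, ← hcoeff] at hmain
  have hDpos : 0 < 1 - 2 * x * t + t ^ 2 := by
    have hxt : x * t ≤ t := by nlinarith
    nlinarith [sq_nonneg (1 - t)]
  have hsq : ‖a - b‖ ^ 2 = ‖b‖ ^ 2 * (1 - 2 * x * t + t ^ 2) := by
    rw [norm_sub_sq_real, hxdef, htdef]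
    field_simp
    ring
  have hD : ‖a - b‖ = ‖b‖ * Real.sqrt (1 - 2 * x * t + t ^ 2) := by
    have h1 : ‖a - b‖ = Real.sqrt (‖b‖ ^ 2 * (1 - 2 * x * t + t ^ 2)) := by
      rw [← hsq, Real.sqrt_sq (norm_nonneg _)]
    rw [h1, Real.sqrt_mul (sq_nonneg _), Real.sqrt_sq hb0.le]
  have hfinal := hmain.mul_left (1 / (4 * Real.pi * ‖b‖))
  have hsqrt_pos : 0 < Real.sqrt (1 - 2 * x * t + t ^ 2) := Real.sqrt_pos.mpr hDpos
  have h2 : 1 / (4 * Real.pi * ‖b‖) * (Real.sqrt (1 - 2 * x * t + t ^ 2))⁻¹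
      = 1 / (4 * Real.pi * ‖a - b‖) := by
    rw [hD]
    have hπ := Real.pi_pos
    field_simp
  rw [h2] at hfinal
  have h1 : (fun n => 1 / (4 * Real.pi * ‖b‖) * ((legendre n).eval x * t ^ n))
      = fun n : ℕ => (1 / (4 * Real.pi)) * (‖a‖ ^ n / ‖b‖ ^ (n + 1)) * (legendre n).eval x := by
    funext n
    rw [htdef, div_pow]
    have hπ := Real.pi_pos
    have hbn : ‖b‖ ^ n ≠ 0 := by positivity
    field_simp
    ring
  rw [h1] at hfinal
  exact hfinal
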